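/- Let λ > 1, a ∈ ℝⁿ \ {0}, f(x) = λ(x - a) + a, and h(x) = λx, and let G be the group generated by f and h. Then for every m ∈ ℤ, the translation x ↦ x + (1 - λ^m)a belongs to G. -/

import Mathlib

theorem stmt_7 {n : ℕ} (l : ℝ) (hl : 1 < l) (a : Fin n → ℝ) (ha : a ≠ 0)
    (f h : Equiv.Perm (Fin n → ℝ))
    (hf : ∀ x, f x = l • (x - a) + a) (hh : ∀ x, h x = l • x)
    (G : Subgroup (Equiv.Perm (Fin n → ℝ))) (hG : G = Subgroup.closure {f, h}) :
    ∀ m : ℤ, ∃ g ∈ G, ∀ x, g x = x + (1 - l ^ m) • a := by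
  have hl0 : l ≠ 0 := by linarith
  -- inverse formulas
  have hfinv : ∀ x, f⁻¹ x = l⁻¹ • (x - a) + a := by
    intro x
    have : f (l⁻¹ • (x - a) + a) = x := by
      rw [hf]
      simp [smul_smul, mul_inv_cancel₀ hl0]
    rw [Equiv.Perm.inv_def, Equiv.symm_apply_eq]
    exact this.symm
  have hhinv : ∀ x, h⁻¹ x = l⁻¹ • x := by
    intro x
    have : h (l⁻¹ • x) = x := by
      rw [hh, smul_smul, mul_inv_cancel₀ hl0, one_smul]
    rw [Equiv.Perm.inv_def, Equiv.symm_apply_eq]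
    exact this.symm
  -- zpow formulas
  have hfpow : ∀ m : ℤ, ∀ x, (f ^ m) x = l ^ m • (x - a) + a := by
    intro m
    induction m using Int.induction_on with
    | zero => intro x; simp
    | succ k ih =>
      intro x
      have : f ^ ((k : ℤ) + 1) = f ^ (k : ℤ) * f := by rw [zpow_add_one]
      rw [this, Equiv.Perm.mul_apply, ih, hf]
      have : l • (x - a) + a - a = l • (x - a) := by abel
      rw [this, smul_smul, zpow_add_one₀ hl0, mul_comm]
    | pred k ih =>
      intro x
      have : f ^ (-(k : ℤ) - 1) = f ^ (-(k : ℤ)) * f⁻¹ := by rw [zpow_sub_one]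
      rw [this, Equiv.Perm.mul_apply, ih, hfinv]
      have h1 : l⁻¹ • (x - a) + a - a = l⁻¹ • (x - a) := by abel
      rw [h1, smul_smul, zpow_sub_one₀ hl0, mul_comm, zpow_neg]
  have hhpow : ∀ m : ℤ, ∀ x, (h ^ m) x = l ^ m • x := by
    intro m
    induction m using Int.induction_on with
    | zero => intro x; simp
    | succ k ih =>
      intro x
      have : h ^ ((k : ℤ) + 1) = h ^ (k : ℤ) * h := by rw [zpow_add_one]
      rw [this, Equiv.Perm.mul_apply, ih, hh, smul_smul, zpow_add_one₀ hl0,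
        mul_comm]
    | pred k ih =>
      intro x
      have : h ^ (-(k : ℤ) - 1) = h ^ (-(k : ℤ)) * h⁻¹ := by rw [zpow_sub_one]
      rw [this, Equiv.Perm.mul_apply, ih, hhinv, smul_smul,
        zpow_sub_one₀ hl0, mul_comm, zpow_neg]
  intro m
  refine ⟨f ^ m * h ^ (-m), ?_, ?_⟩
  · subst hG
    exact mul_mem (zpow_mem (Subgroup.subset_closure (by simp)) m)
      (zpow_mem (Subgroup.subset_closure (by simp)) (-m))
  · intro x
    rw [Equiv.Perm.mul_apply, hhpow, hfpow, smul_sub, smul_smul,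
      ← zpow_add₀ hl0, add_neg_cancel, zpow_zero, one_smul, sub_smul, one_smul]
    abel
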